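/- arXiv:1710.03214 — 4 statements merged into one kernel-verified Lean document; each statement's English description precedes it below -/
import Mathlib

section
/- Let F be a field, let μ₁,...,μ_d be distinct nonzero elements of F, and let y₁,...,y_d be indeterminates. Then the d×d matrix A over the rational function field F(y₁,...,y_d), with (i,j)-th entry 1/(y_i - μ_j)², has nonzero determinant. -/
/-- For a field `F` (characteristic 0 suffices) and distinct nonzero
`μ₁,…,μ_d ∈ F`, the `d×d` matrix over the rational function field `F(y₁,…,y_d)`
with `(i,j)` entry `1/(y_i - μ_j)²` has nonzero determinant. -/
theorem stmt0 (F : Type*) [Field F] [CharZero F] (d : ℕ)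
    (μ : Fin d → F) (hinj : Function.Injective μ) (hne : ∀ j, μ j ≠ 0) :
    let K := FractionRing (MvPolynomial (Fin d) F)
    let y : Fin d → K := fun i => algebraMap (MvPolynomial (Fin d) F) K (MvPolynomial.X i)
    let c : Fin d → K := fun j => algebraMap (MvPolynomial (Fin d) F) K (MvPolynomial.C (μ j))
    Matrix.det (Matrix.of fun i j => ((y i - c j) ^ 2)⁻¹) ≠ 0 := by
  intro K y c
  set R := MvPolynomial (Fin d) F with hR
  set f : R →+* K := (algebraMap R K : R →+* K) with hf
  have hfinj : Function.Injective f := IsFractionRing.injective R K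
  have hXC : ∀ i j : Fin d, (MvPolynomial.X i - MvPolynomial.C (μ j) : R) ≠ 0 := by
    intro i j h
    have h2 := congrArg (MvPolynomial.coeff (Finsupp.single i 1)) h
    rw [MvPolynomial.coeff_sub, MvPolynomial.coeff_X, MvPolynomial.coeff_C] at h2
    rw [if_pos rfl, if_neg (show ¬ ((0 : Fin d →₀ ℕ) = Finsupp.single i 1) from fun hc => one_ne_zero (Finsupp.single_eq_zero.1 hc.symm)), sub_zero] at h2
    exact one_ne_zero h2
  have hyc : ∀ i j : Fin d, y i - c j ≠ 0 := by
    intro i j h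
    apply hXC i j
    apply hfinj
    rw [map_sub, map_zero]
    exact h
  -- the polynomial matrix obtained by clearing denominators row-wise
  set P : Matrix (Fin d) (Fin d) R :=
    Matrix.of fun i j => ∏ k ∈ Finset.univ.erase j,
      (MvPolynomial.X i - MvPolynomial.C (μ k)) ^ 2 with hP
  -- det P ≠ 0 : evaluate at y i := μ i, getting a diagonal matrix
  have hdetP : P.det ≠ 0 := by
    intro h
    set e : R →+* F := MvPolynomial.eval μ with he
    have h2 := congrArg e h
    rw [map_zero, RingHom.map_det] at h2
    have hdiag : e.mapMatrix P =
        Matrix.diagonal (fun i => ∏ k ∈ Finset.univ.erase i, (μ i - μ k) ^ 2) := by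
      ext i j
      by_cases hij : i = j
      · subst hij
        simp only [hP, he, RingHom.mapMatrix_apply, Matrix.map_apply, Matrix.of_apply,
          map_prod, map_pow, map_sub, MvPolynomial.eval_X, MvPolynomial.eval_C,
          Matrix.diagonal_apply_eq]
        exact Finset.prod_congr rfl fun k _ => by
          rw [MvPolynomial.eval_X, MvPolynomial.eval_C]
      · have hi : i ∈ Finset.univ.erase j := Finset.mem_erase.2 ⟨hij, Finset.mem_univ i⟩
        have : e (P i j) = 0 := by
          simp only [hP, he, Matrix.of_apply, map_prod, map_pow, map_sub,
            MvPolynomial.eval_X, MvPolynomial.eval_C]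
          exact Finset.prod_eq_zero hi (by rw [MvPolynomial.eval_X, MvPolynomial.eval_C, sub_self]; exact zero_pow two_ne_zero)
        simpa [Matrix.diagonal, hij] using this
    rw [hdiag, Matrix.det_diagonal] at h2
    have : ∀ i : Fin d, (∏ k ∈ Finset.univ.erase i, (μ i - μ k) ^ 2) ≠ 0 := by
      intro i
      apply Finset.prod_ne_zero_iff.2
      intro k hk
      have : μ i ≠ μ k := fun hc => (Finset.mem_erase.1 hk).1 (hinj hc).symm
      exact pow_ne_zero _ (sub_ne_zero.2 this)
    exact Finset.prod_ne_zero_iff.2 (fun i _ => this i) h2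
  -- relate det A to det P
  set v : Fin d → K := fun i => ∏ k, (y i - c k) ^ 2 with hv
  have hvne : ∀ i, v i ≠ 0 := fun i =>
    Finset.prod_ne_zero_iff.2 fun k _ => pow_ne_zero _ (hyc i k)
  have key : (Matrix.of fun i j => v i * ((y i - c j) ^ 2)⁻¹) = P.map f := by
    ext i j
    have hsplit : v i = (y i - c j) ^ 2 * ∏ k ∈ Finset.univ.erase j, (y i - c k) ^ 2 :=
      (Finset.mul_prod_erase Finset.univ _ (Finset.mem_univ j)).symm
    rw [Matrix.of_apply, hsplit, mul_assoc, mul_comm ((y i - c j) ^ 2),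
      mul_assoc, inv_mul_cancel₀ (pow_ne_zero _ (hyc i j)), mul_one]
    simp [hP, Matrix.map_apply, map_prod, y, c, f]
    rfl
  have hdet := Matrix.det_mul_column v (Matrix.of fun i j => ((y i - c j) ^ 2)⁻¹)
  rw [show (Matrix.of fun i j => v i * (Matrix.of fun i j => ((y i - c j) ^ 2)⁻¹) i j)
      = P.map f from key, show P.map f = f.mapMatrix P from rfl, ← RingHom.map_det] at hdet
  intro hzero
  rw [hzero, mul_zero] at hdet
  exact hdetP (hfinj (by rw [map_zero]; exact hdet))
end

section
/- Let F be a field, δ ≥ 1, A ∈ F[x₁,...,x_n] a polynomial of total degree < δ with A(0) = μ ≠ 0, and B ∈ F[x₁,...,x_n] a homogeneous polynomial of degree δ. Let y ∈ F with y ≠ μ. Then in the quotient ring F[[x₁,...,x_n]]/⟨x₁,...,x_n⟩^{δ+1}, the elements y − (A+B) and y − A are invertible and 1/(y−(A+B)) ≡ 1/(y−A) + B/(y−μ)² (mod ⟨x₁,...,x_n⟩^{δ+1}). -/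
lemma aux_prod_mem {R α : Type*} [CommSemiring R] (J : Ideal R) (x : α → R)
    (hx : ∀ a, x a ∈ J) (s : Finset α) (f : α → ℕ) :
    (∏ a ∈ s, x a ^ f a) ∈ J ^ (∑ a ∈ s, f a) := by
  classical
  induction s using Finset.cons_induction with
  | empty => simp [Ideal.one_eq_top]
  | cons a s ha ih =>
    rw [Finset.prod_cons, Finset.sum_cons, pow_add]
    exact Ideal.mul_mem_mul (Ideal.pow_mem_pow (hx a) _) ih

open MvPolynomial in
lemma homog_mem_pow {F : Type*} [CommSemiring F] {n δ : ℕ} {B : MvPolynomial (Fin n) F}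
    (hB : B.IsHomogeneous δ) :
    B ∈ (Ideal.span (Set.range (MvPolynomial.X : Fin n → MvPolynomial (Fin n) F))) ^ δ := by
  rw [B.as_sum]
  refine Submodule.sum_mem _ fun m hm => ?_
  have hdeg : m.degree = δ := by
    have h1 := hB (mem_support_iff.1 hm)
    rw [Finsupp.degree_eq_weight_one]; exact h1
  rw [monomial_eq]
  apply Ideal.mul_mem_left
  rw [Finsupp.prod, ← hdeg]
  exact aux_prod_mem _ _ (fun a => Ideal.subset_span (Set.mem_range_self a)) m.support m

set_option maxHeartbeats 2000000 in
/-- Series inverse lemma. For `δ ≥ 1`, `A` a polynomial of total degree `< δ`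
with constant term `μ ≠ 0`, `B` homogeneous of degree `δ`, and `y ∈ F` with `y ≠ μ`:
in `F[[x₁,…,x_n]]/⟨x̄⟩^{δ+1}`, both `y − (A+B)` and `y − A` are invertible and
`1/(y−(A+B)) = 1/(y−A) + B/(y−μ)²`. -/
theorem stmt3 (F : Type*) [Field F] (n δ : ℕ) (hδ : 1 ≤ δ)
    (A B : MvPolynomial (Fin n) F) (μ : F)
    (hA : A.totalDegree < δ) (hμ0 : MvPolynomial.coeff 0 A = μ) (hμ : μ ≠ 0)
    (hB : B.IsHomogeneous δ) (y : F) (hy : y ≠ μ) :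
    let R := MvPowerSeries (Fin n) F
    let I : Ideal R := Ideal.span (Set.range (MvPowerSeries.X : Fin n → R))
    let Q := R ⧸ (I ^ (δ + 1))
    let π : R →+* Q := Ideal.Quotient.mk (I ^ (δ + 1))
    let ι : MvPolynomial (Fin n) F →+* R := MvPolynomial.coeToMvPowerSeries.ringHom
    let u : Q := π (MvPowerSeries.C (σ := Fin n) (R := F) y - ι A)
    let v : Q := π (MvPowerSeries.C (σ := Fin n) (R := F) y - ι (A + B))
    IsUnit u ∧ IsUnit v ∧
      Ring.inverse v = Ring.inverse u + π (ι B) * π (MvPowerSeries.C (σ := Fin n) (R := F) (((y - μ) ^ 2)⁻¹)) := by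
  intro R I Q π ι u v
  set t : F := y - μ with ht
  have htne : t ≠ 0 := sub_ne_zero.2 hy
  set J : Ideal (MvPolynomial (Fin n) F) :=
    Ideal.span (Set.range (MvPolynomial.X : Fin n → MvPolynomial (Fin n) F)) with hJ
  have hmap : ∀ k : ℕ, ∀ p ∈ J ^ k, ι p ∈ I ^ k := by
    intro k p hp
    have hle : Ideal.map ι (J ^ k) ≤ I ^ k := by
      rw [Ideal.map_pow]
      refine Ideal.pow_right_mono ?_ k
      rw [hJ, Ideal.map_span]
      refine Ideal.span_le.2 ?_
      rintro _ ⟨_, ⟨i, rfl⟩, rfl⟩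
      refine Ideal.subset_span ⟨i, ?_⟩
      rw [MvPolynomial.coeToMvPowerSeries.ringHom_apply, MvPolynomial.coe_X]
    exact hle (Ideal.mem_map_of_mem _ hp)
  have hBJ : B ∈ J ^ δ := homog_mem_pow hB
  have hAμ : A - MvPolynomial.C μ ∈ J := by
    rw [hJ, ← Set.image_univ, MvPolynomial.mem_ideal_span_X_image]
    intro m hm
    have hmne : m ≠ 0 := by
      rintro rfl
      simp [MvPolynomial.mem_support_iff, hμ0] at hm
    obtain ⟨i, hi⟩ := Finsupp.ne_iff.1 hmne
    exact ⟨i, Set.mem_univ i, by simpa using hi⟩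
  have hπ0 : ∀ r : R, r ∈ I ^ (δ + 1) → π r = 0 := fun r hr =>
    (Ideal.Quotient.eq_zero_iff_mem).2 hr
  have hb2 : π (ι B) * π (ι B) = 0 := by
    rw [← map_mul, ← map_mul]
    refine hπ0 _ ?_
    have hm : B * B ∈ J ^ (δ + δ) := by
      rw [pow_add]; exact Ideal.mul_mem_mul hBJ hBJ
    exact (Ideal.pow_le_pow_right (by omega)) (hmap _ _ hm)
  have hbA : π (ι B) * π (ι (A - MvPolynomial.C μ)) = 0 := by
    rw [← map_mul, ← map_mul]
    refine hπ0 _ ?_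
    have hm : B * (A - MvPolynomial.C μ) ∈ J ^ (δ + 1) := by
      rw [pow_succ]; exact Ideal.mul_mem_mul hBJ hAμ
    exact hmap _ _ hm
  have hconstι : ∀ p : MvPolynomial (Fin n) F,
      MvPowerSeries.constantCoeff (σ := Fin n) (R := F) (ι p) = MvPolynomial.coeff 0 p := by
    intro p
    rw [← MvPowerSeries.coeff_zero_eq_constantCoeff_apply,
      MvPolynomial.coeToMvPowerSeries.ringHom_apply, MvPolynomial.coeff_coe]
  have hB0 : MvPolynomial.coeff 0 B = 0 :=
    hB.coeff_eq_zero (by simp [map_zero]; omega)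
  have huR : IsUnit (MvPowerSeries.C (σ := Fin n) (R := F) y - ι A) := by
    rw [MvPowerSeries.isUnit_iff_constantCoeff, map_sub, hconstι, hμ0,
      MvPowerSeries.constantCoeff_C]
    exact (sub_ne_zero.2 hy).isUnit
  have hvR : IsUnit (MvPowerSeries.C (σ := Fin n) (R := F) y - ι (A + B)) := by
    rw [MvPowerSeries.isUnit_iff_constantCoeff, map_sub, hconstι,
      MvPolynomial.coeff_add, hμ0, hB0, add_zero, MvPowerSeries.constantCoeff_C]
    exact (sub_ne_zero.2 hy).isUnit
  have hu : IsUnit u := huR.map π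
  have hv : IsUnit v := hvR.map π
  refine ⟨hu, hv, ?_⟩
  set b : Q := π (ι B) with hbdef
  set c : Q := π (MvPowerSeries.C (σ := Fin n) (R := F) t) with hcdef
  set k : Q := π (MvPowerSeries.C (σ := Fin n) (R := F) ((t ^ 2)⁻¹)) with hkdef
  have hcC : ∀ s₁ s₂ : F, π (MvPowerSeries.C (σ := Fin n) (R := F) s₁) * π (MvPowerSeries.C (σ := Fin n) (R := F) s₂)
      = π (MvPowerSeries.C (σ := Fin n) (R := F) (s₁ * s₂)) := by
    intro s₁ s₂; rw [← map_mul, ← map_mul]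
  have hue : u = c - π (ι (A - MvPolynomial.C μ)) := by
    rw [hcdef, ← map_sub]
    show π _ = π _
    congr 1
    rw [ht, map_sub (MvPowerSeries.C (σ := Fin n) (R := F)), map_sub ι]
    have : ι (MvPolynomial.C μ) = MvPowerSeries.C (σ := Fin n) (R := F) μ := by
      rw [MvPolynomial.coeToMvPowerSeries.ringHom_apply, MvPolynomial.coe_C]
    rw [this]; ring
  have hbu : b * u = c * b := by
    rw [hue, mul_sub, hbA, sub_zero, mul_comm]
  have hct : c * π (MvPowerSeries.C (σ := Fin n) (R := F) t⁻¹) = 1 := by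
    rw [hcdef, hcC, mul_inv_cancel₀ htne, map_one, map_one]
  have h1 : b = c * (b * Ring.inverse u) := by
    calc b = b * (u * Ring.inverse u) := by rw [Ring.mul_inverse_cancel _ hu, mul_one]
    _ = (b * u) * Ring.inverse u := by ring
    _ = c * (b * Ring.inverse u) := by rw [hbu]; ring
  have hbinv : b * Ring.inverse u = b * π (MvPowerSeries.C (σ := Fin n) (R := F) t⁻¹) := by
    calc b * Ring.inverse u
        = (c * π (MvPowerSeries.C (σ := Fin n) (R := F) t⁻¹)) * (b * Ring.inverse u) := by
          rw [hct, one_mul]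
    _ = π (MvPowerSeries.C (σ := Fin n) (R := F) t⁻¹) * (c * (b * Ring.inverse u)) := by ring
    _ = π (MvPowerSeries.C (σ := Fin n) (R := F) t⁻¹) * b := by rw [← h1]
    _ = b * π (MvPowerSeries.C (σ := Fin n) (R := F) t⁻¹) := mul_comm _ _
  have hvu : v = u - b := by
    show π _ = π _ - π _
    rw [← map_sub]
    congr 1
    rw [map_add]; ring
  have hkey : v * (Ring.inverse u + b * k) = 1 := by
    rw [hvu]
    have expand : (u - b) * (Ring.inverse u + b * k)
        = u * Ring.inverse u + (u * (b * k) - b * Ring.inverse u) - (b * b) * k := by ring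
    rw [expand, Ring.mul_inverse_cancel _ hu, hb2, zero_mul, sub_zero]
    have h2 : u * (b * k) = b * (c * k) := by
      rw [show u * (b * k) = (b * u) * k by ring, hbu]; ring
    have h3 : c * k = π (MvPowerSeries.C (σ := Fin n) (R := F) t⁻¹) := by
      have hsc : t * (t ^ 2)⁻¹ = t⁻¹ := by
        rw [sq, mul_inv, ← mul_assoc, mul_inv_cancel₀ htne, one_mul]
      rw [hcdef, hkdef, hcC, hsc]
    rw [h2, h3, hbinv]
    ring
  calc Ring.inverse v
      = Ring.inverse v * (v * (Ring.inverse u + b * k)) := by rw [hkey, mul_one]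
  _ = (Ring.inverse v * v) * (Ring.inverse u + b * k) := by ring
  _ = Ring.inverse u + b * k := by rw [Ring.inverse_mul_cancel _ hv, one_mul]
end

section
/- Let F be a field of characteristic 0, and let f = (y−g)^e · h in F[[x₁,...,x_n]][y], where g ∈ F[[x̄]], e ≥ 1, and h ∈ F[[x̄]][y] satisfies h(x̄, g) ≢ 0 mod ⟨x̄⟩ (i.e., the constant term of h evaluated at y=g is nonzero). Suppose y_t ∈ F[[x̄]] with y_t ≡ g mod ⟨x̄⟩^{2^t} for some t ≥ 1. Then the ratio (f/∂_y f)|_{y=y_t} is a well-defined element of F[[x̄]], and y_{t+1} := y_t − e·(f/∂_y f)|_{y=y_t} satisfies y_{t+1} ≡ g mod ⟨x̄⟩^{2^{t+1}}. -/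
/-- Newton iteration with multiplicity. Let `f = (y−g)^e·h` in `F[[x̄]][y]`,
char 0, with `h(g)` having nonzero constant term, `e ≥ 1`, and let `y_t ≡ g mod ⟨x̄⟩^{2^t}`
(`t ≥ 1`). Then the ratio `(f/∂_y f)|_{y=y_t}` exists in `F[[x̄]]` (there is `q` with
`(∂_y f)(y_t)·q = f(y_t)`) and `y_{t+1} := y_t − e·q` satisfies `y_{t+1} ≡ g mod ⟨x̄⟩^{2^{t+1}}`. -/
theorem stmt6 (F : Type*) [Field F] [CharZero F] (n : ℕ)
    (g : MvPowerSeries (Fin n) F) (e : ℕ) (he : 1 ≤ e)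
    (h f : Polynomial (MvPowerSeries (Fin n) F))
    (hf : f = (Polynomial.X - Polynomial.C g) ^ e * h)
    (hh : MvPowerSeries.constantCoeff (σ := Fin n) (R := F) (Polynomial.eval g h) ≠ 0)
    (t : ℕ) (ht : 1 ≤ t) (yt : MvPowerSeries (Fin n) F)
    (hyt : yt - g ∈
      (Ideal.span (Set.range (MvPowerSeries.X : Fin n → MvPowerSeries (Fin n) F))) ^ (2 ^ t)) :
    ∃ q : MvPowerSeries (Fin n) F,
      Polynomial.eval yt (Polynomial.derivative f) * q = Polynomial.eval yt f ∧
      (yt - (e : MvPowerSeries (Fin n) F) * q) - g ∈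
        (Ideal.span (Set.range (MvPowerSeries.X : Fin n → MvPowerSeries (Fin n) F))) ^ (2 ^ (t + 1)) := by
  classical
  set I : Ideal (MvPowerSeries (Fin n) F) :=
    Ideal.span (Set.range (MvPowerSeries.X : Fin n → MvPowerSeries (Fin n) F)) with hI
  set cc := MvPowerSeries.constantCoeff (σ := Fin n) (R := F) with hcc
  set d : MvPowerSeries (Fin n) F := yt - g with hd
  have hIle : I ≤ RingHom.ker cc := by
    rw [hI, Ideal.span_le]
    rintro _ ⟨i, rfl⟩
    simp [hcc, RingHom.mem_ker, MvPowerSeries.constantCoeff_X]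
  have hdI : d ∈ I := by
    have h1 : I ^ (2 ^ t) ≤ I ^ 1 := Ideal.pow_le_pow_right (Nat.one_le_two_pow)
    simpa [hd] using h1 hyt
  have hdc : cc d = 0 := hIle hdI
  have hyg : cc yt = cc g := by
    have h2 := hdc
    rw [hd, map_sub, sub_eq_zero] at h2
    exact h2
  have hhyt : cc (Polynomial.eval yt h) = cc (Polynomial.eval g h) := by
    rw [← Polynomial.eval₂_at_apply cc yt, ← Polynomial.eval₂_at_apply cc g, hyg]
  set u : MvPowerSeries (Fin n) F :=
    (e : MvPowerSeries (Fin n) F) * Polynomial.eval yt h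
      + d * Polynomial.eval yt (Polynomial.derivative h) with hu
  have hcu : cc u ≠ 0 := by
    have hde : cc (d * Polynomial.eval yt (Polynomial.derivative h)) = 0 := by
      rw [map_mul, hdc, zero_mul]
    have hce : cc ((e : MvPowerSeries (Fin n) F)) = (e : F) := by simp [hcc]
    rw [hu, map_add, map_mul, hde, add_zero, hce, hhyt]
    exact mul_ne_zero (Nat.cast_ne_zero.mpr (by omega)) hh
  have huu : IsUnit u := MvPowerSeries.isUnit_iff_constantCoeff.mpr
    (isUnit_iff_ne_zero.mpr hcu)
  obtain ⟨w, hw⟩ := huu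
  set v : MvPowerSeries (Fin n) F := (↑w⁻¹ : MvPowerSeries (Fin n) F) with hv
  have hwv : u * v = 1 := by rw [← hw, hv]; exact_mod_cast w.mul_inv
  have hpow : d ^ e = d ^ (e - 1) * d := by
    rw [← pow_succ, Nat.sub_add_cancel he]
  have hevX : Polynomial.eval yt (Polynomial.X - Polynomial.C g) = d := by
    simp [hd]
  have hef : Polynomial.eval yt f = d ^ e * Polynomial.eval yt h := by
    rw [hf]; simp [hevX]
  have hef' : Polynomial.eval yt (Polynomial.derivative f) = d ^ (e - 1) * u := by
    rw [hf, Polynomial.derivative_mul, Polynomial.derivative_pow]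
    simp only [Polynomial.derivative_sub, Polynomial.derivative_X, Polynomial.derivative_C,
      sub_zero, mul_one, Polynomial.eval_add, Polynomial.eval_mul, Polynomial.eval_pow,
      Polynomial.eval_natCast, hevX, Polynomial.eval_C]
    rw [hpow, hu]
    ring
  refine ⟨d * Polynomial.eval yt h * v, ?_, ?_⟩
  · rw [hef', hef]
    calc d ^ (e - 1) * u * (d * Polynomial.eval yt h * v)
        = d ^ (e - 1) * d * Polynomial.eval yt h * (u * v) := by ring
      _ = d ^ e * Polynomial.eval yt h := by rw [hwv, mul_one, ← hpow]
  · have key : yt - (e : MvPowerSeries (Fin n) F) * (d * Polynomial.eval yt h * v) - g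
        = d * d * (Polynomial.eval yt (Polynomial.derivative h) * v) := by
      have h1 : yt - (e : MvPowerSeries (Fin n) F) * (d * Polynomial.eval yt h * v) - g
          = d * (u * v) - (e : MvPowerSeries (Fin n) F) * (d * Polynomial.eval yt h * v) := by
        rw [hwv, mul_one, hd]; ring
      rw [h1, hu]; ring
    rw [key]
    have h2 : (2 : ℕ) ^ (t + 1) = 2 ^ t + 2 ^ t := by ring
    rw [h2, pow_add]
    exact Ideal.mul_mem_right _ _ (Ideal.mul_mem_mul (hd ▸ hyt) (hd ▸ hyt))
end

section
/- Let F be a field and let f = ∏_{i=1}^{d₀}(y − g_i)^{γ_i} in F[[x₁,...,x_n]][y] with γ_i > 0, g_i ∈ F[[x̄]], and with the constant terms μ_i := g_i(0̄) pairwise distinct. Fix δ ≥ 1 and let y = c ∈ F be distinct from all μ_i. Write g_i^{<δ} for the truncation of g_i to degrees < δ and g_i^{=δ} for its degree-δ homogeneous part. Then ((∂_y f)/f)|_{y=c} ≡ ∑_{i=1}^{d₀} γ_i/(c − g_i^{<δ}) + ∑_{i=1}^{d₀} γ_i·g_i^{=δ}/(c − μ_i)² (mod ⟨x̄⟩^{δ+1}).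 -/
/-- Truncation of a multivariate power series to (total) degrees `< δ`. -/
noncomputable def truncLT {F : Type*} [Field F] {n : ℕ} (δ : ℕ)
    (g : MvPowerSeries (Fin n) F) : MvPowerSeries (Fin n) F :=
  fun e => if (e.sum fun _ k => k) < δ then MvPowerSeries.coeff (R := F) e g else 0

/-- Degree-`δ` homogeneous part of a multivariate power series. -/
noncomputable def homPart {F : Type*} [Field F] {n : ℕ} (δ : ℕ)
    (g : MvPowerSeries (Fin n) F) : MvPowerSeries (Fin n) F :=
  fun e => if (e.sum fun _ k => k) = δ then MvPowerSeries.coeff (R := F) e g else 0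

section Helpers

variable {F : Type*} [Field F] {n : ℕ}

lemma coeff_X_mul' (i : Fin n) (φ : MvPowerSeries (Fin n) F) (e : Fin n →₀ ℕ) :
    MvPowerSeries.coeff (R := F) e (MvPowerSeries.X i * φ)
      = if Finsupp.single i 1 ≤ e then MvPowerSeries.coeff (R := F) (e - Finsupp.single i 1) φ else 0 := by
  rw [MvPowerSeries.X_def, MvPowerSeries.coeff_monomial_mul]
  split_ifs <;> simp

lemma deg_add_single (e : Fin n →₀ ℕ) (i : Fin n) :
    ((e + Finsupp.single i 1).sum fun _ k => k) = (e.sum fun _ k => k) + 1 := by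
  rw [Finsupp.sum_add_index' (fun _ => rfl) (fun _ _ _ => rfl),
    Finsupp.sum_single_index rfl]

lemma mem_span_pow {m : ℕ} (h : MvPowerSeries (Fin n) F)
    (H : ∀ e : Fin n →₀ ℕ, (e.sum fun _ k => k) < m → MvPowerSeries.coeff (R := F) e h = 0) :
    h ∈ (Ideal.span (Set.range (MvPowerSeries.X : Fin n → MvPowerSeries (Fin n) F))) ^ m := by
  classical
  induction m generalizing h with
  | zero => simpa using Submodule.mem_top
  | succ m ih =>
    set I : Ideal (MvPowerSeries (Fin n) F) :=
      Ideal.span (Set.range (MvPowerSeries.X : Fin n → MvPowerSeries (Fin n) F)) with hI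
    let h' : Fin n → MvPowerSeries (Fin n) F := fun i e =>
      if (∀ j, j < i → e j = 0) then MvPowerSeries.coeff (R := F) (e + Finsupp.single i 1) h else 0
    have hcoeff : ∀ i e, MvPowerSeries.coeff (R := F) e (h' i)
        = if (∀ j, j < i → e j = 0) then MvPowerSeries.coeff (R := F) (e + Finsupp.single i 1) h else 0 :=
      fun i e => rfl
    have hsum : h = ∑ i, MvPowerSeries.X i * h' i := by
      apply MvPowerSeries.ext; intro e
      rw [map_sum]
      by_cases he : e = 0
      · subst he
        rw [H 0 (by simp)]
        symm; apply Finset.sum_eq_zero; intro i _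
        rw [coeff_X_mul', if_neg]
        intro hle
        simpa using Finsupp.single_le_iff.mp hle
      · have hne : e.support.Nonempty := Finsupp.support_nonempty_iff.mpr he
        set i₀ := e.support.min' hne with hi₀def
        have hi₀ : e i₀ ≠ 0 := Finsupp.mem_support_iff.mp (e.support.min'_mem hne)
        have hmin : ∀ j, j < i₀ → e j = 0 := by
          intro j hj
          by_contra hnej
          exact absurd (e.support.min'_le j (Finsupp.mem_support_iff.mpr hnej)) (not_le.mpr hj)
        rw [Finset.sum_eq_single i₀]
        · have hle : Finsupp.single i₀ 1 ≤ e :=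
            Finsupp.single_le_iff.mpr (Nat.one_le_iff_ne_zero.mpr hi₀)
          have hzero : ∀ j, j < i₀ → (e - Finsupp.single i₀ 1 : Fin n →₀ ℕ) j = 0 := by
            intro j hj
            rw [Finsupp.tsub_apply, hmin j hj, Nat.zero_sub]
          rw [coeff_X_mul', if_pos hle, hcoeff, if_pos hzero, tsub_add_cancel_of_le hle]
        · intro b _ hb
          rw [coeff_X_mul']
          split_ifs with hle
          · rw [hcoeff]
            apply if_neg
            intro hall
            have hb_supp : i₀ ≤ b := e.support.min'_le b
              (Finsupp.mem_support_iff.mpr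
                (Nat.one_le_iff_ne_zero.mp (Finsupp.single_le_iff.mp hle)))
            have hlt : i₀ < b := lt_of_le_of_ne hb_supp (Ne.symm hb)
            have h0 := hall i₀ hlt
            rw [Finsupp.tsub_apply, Finsupp.single_apply, if_neg hb,
              Nat.sub_zero] at h0
            exact hi₀ h0
          · rfl
        · intro hi; exact absurd (Finset.mem_univ i₀) hi
    rw [hsum]
    apply Ideal.sum_mem
    intro i _
    have hX : MvPowerSeries.X i ∈ I := Ideal.subset_span ⟨i, rfl⟩
    have hh' : h' i ∈ I ^ m := by
      apply ih
      intro e he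
      rw [hcoeff]
      split_ifs with hcond
      · exact H _ (by rw [deg_add_single]; omega)
      · rfl
    rw [mul_comm, pow_succ]
    exact Ideal.mul_mem_mul hh' hX

lemma deriv_prod {R : Type*} [CommRing R] {ι : Type*} [DecidableEq ι] (s : Finset ι)
    (p : ι → Polynomial R) :
    Polynomial.derivative (∏ i ∈ s, p i)
      = ∑ i ∈ s, (∏ j ∈ s.erase i, p j) * Polynomial.derivative (p i) := by
  induction s using Finset.induction_on with
  | empty => simp
  | @insert a s ha ih =>
    rw [Finset.prod_insert ha, Polynomial.derivative_mul, ih, Finset.sum_insert ha,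
      Finset.erase_insert ha, Finset.mul_sum]
    have hterm : ∀ i ∈ s, p a * ((∏ j ∈ s.erase i, p j) * Polynomial.derivative (p i))
        = (∏ j ∈ (insert a s).erase i, p j) * Polynomial.derivative (p i) := by
      intro i hi
      rw [Finset.erase_insert_of_ne (fun hh => ha (by rw [hh]; exact hi)),
        Finset.prod_insert (fun hh => ha (Finset.mem_of_mem_erase hh)), mul_assoc]
    rw [Finset.sum_congr rfl hterm]
    ring

lemma inverse_eq_of_mul_eq_one' {R : Type*} [CommRing R] {a b : R} (h : a * b = 1) :
    Ring.inverse a = b := by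
  have ha : IsUnit a := IsUnit.of_mul_eq_one _ h
  calc Ring.inverse a = Ring.inverse a * (a * b) := by rw [h, mul_one]
    _ = b := by rw [← mul_assoc, Ring.inverse_mul_cancel _ ha, one_mul]

lemma inv_lemma {δ : ℕ} (hδ : 1 ≤ δ) (g : MvPowerSeries (Fin n) F) (c : F)
    (hc : c ≠ MvPowerSeries.constantCoeff (σ := Fin n) (R := F) g) :
    Ring.inverse (MvPowerSeries.C (σ := Fin n) (R := F) c - g)
      - Ring.inverse (MvPowerSeries.C (σ := Fin n) (R := F) c - truncLT δ g)
      - homPart δ g *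
          MvPowerSeries.C (σ := Fin n) (R := F) (((c - MvPowerSeries.constantCoeff (σ := Fin n) (R := F) g) ^ 2)⁻¹)
      ∈ (Ideal.span (Set.range (MvPowerSeries.X : Fin n → MvPowerSeries (Fin n) F))) ^ (δ + 1) := by
  classical
  set C : F →+* MvPowerSeries (Fin n) F := MvPowerSeries.C (σ := Fin n) (R := F) with hCdef
  set I : Ideal (MvPowerSeries (Fin n) F) :=
    Ideal.span (Set.range (MvPowerSeries.X : Fin n → MvPowerSeries (Fin n) F)) with hIdef
  set μ : F := MvPowerSeries.constantCoeff (σ := Fin n) (R := F) g with hμdef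
  have hμne : c - μ ≠ 0 := sub_ne_zero.mpr hc
  set u : MvPowerSeries (Fin n) F := C c - g with hudef
  set A : MvPowerSeries (Fin n) F := C c - truncLT δ g with hAdef
  set B : MvPowerSeries (Fin n) F := homPart δ g with hBdef
  set w : F := ((c - μ) ^ 2)⁻¹ with hwdef
  have hcoeff_trunc : ∀ e, MvPowerSeries.coeff (R := F) e (truncLT δ g)
      = if (e.sum fun _ k => k) < δ then MvPowerSeries.coeff (R := F) e g else 0 := fun e => rfl
  have hcoeff_hom : ∀ e, MvPowerSeries.coeff (R := F) e B
      = if (e.sum fun _ k => k) = δ then MvPowerSeries.coeff (R := F) e g else 0 := fun e => rfl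
  have hcc_trunc : MvPowerSeries.constantCoeff (σ := Fin n) (R := F) (truncLT δ g) = μ := by
    rw [← MvPowerSeries.coeff_zero_eq_constantCoeff_apply, hcoeff_trunc,
      if_pos (by simpa using Nat.one_le_iff_ne_zero.mp hδ |>.bot_lt), MvPowerSeries.coeff_zero_eq_constantCoeff_apply]
  have hccu : MvPowerSeries.constantCoeff (σ := Fin n) (R := F) u = c - μ := by
    rw [hudef, map_sub]
    rw [show MvPowerSeries.constantCoeff (σ := Fin n) (R := F) (C c) = c from
      MvPowerSeries.constantCoeff_C c, hμdef]
  have hccA : MvPowerSeries.constantCoeff (σ := Fin n) (R := F) A = c - μ := by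
    rw [hAdef, map_sub, hcc_trunc]
    rw [show MvPowerSeries.constantCoeff (σ := Fin n) (R := F) (C c) = c from
      MvPowerSeries.constantCoeff_C c]
  have hu : IsUnit u :=
    MvPowerSeries.isUnit_iff_constantCoeff.mpr (by rw [hccu]; exact hμne.isUnit)
  have hA : IsUnit A :=
    MvPowerSeries.isUnit_iff_constantCoeff.mpr (by rw [hccA]; exact hμne.isUnit)
  set D : MvPowerSeries (Fin n) F := Ring.inverse u - Ring.inverse A - B * C w with hDdef
  have hT : g - truncLT δ g - B ∈ I ^ (δ + 1) := by
    apply mem_span_pow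
    intro e he
    rw [map_sub, map_sub, hcoeff_trunc, hcoeff_hom]
    rcases lt_or_ge (e.sum fun _ k => k) δ with hlt | hge
    · rw [if_pos hlt, if_neg (by omega)]; ring
    · have heq : (e.sum fun _ k => k) = δ := by omega
      rw [if_neg (by omega), if_pos heq]; ring
  have hBmem : B ∈ I ^ δ := by
    apply mem_span_pow
    intro e he
    rw [hcoeff_hom, if_neg (by omega)]
  have hone : (1 : MvPowerSeries (Fin n) F) - u * A * C w ∈ I ^ 1 := by
    apply mem_span_pow
    intro e he
    have he0 : e = 0 := by
      by_contra hne
      obtain ⟨j, hj⟩ := Finsupp.support_nonempty_iff.mpr hne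
      have h1 : e j ≤ e.sum (fun _ k => k) :=
        Finset.single_le_sum (fun _ _ => Nat.zero_le _) hj
      have h2 : e j ≠ 0 := Finsupp.mem_support_iff.mp hj
      omega
    subst he0
    rw [MvPowerSeries.coeff_zero_eq_constantCoeff_apply, map_sub, map_one, map_mul, map_mul,
      hccu, hccA]
    rw [show MvPowerSeries.constantCoeff (σ := Fin n) (R := F) (C w) = w from
      MvPowerSeries.constantCoeff_C w]
    have hcm : (c - μ) * (c - μ) * w = 1 := by
      rw [hwdef, ← sq]
      exact mul_inv_cancel₀ (pow_ne_zero 2 hμne)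
    rw [hcm, sub_self]
  have h1 : u * Ring.inverse u = 1 := Ring.mul_inverse_cancel u hu
  have h2 : A * Ring.inverse A = 1 := Ring.mul_inverse_cancel A hA
  have h3 : A - u = g - truncLT δ g := by rw [hudef, hAdef]; ring
  have key : u * A * D = (g - truncLT δ g - B) + B * (1 - u * A * C w) := by
    rw [hDdef]
    linear_combination A * h1 - u * h2 + h3
  have hkey_mem : u * A * D ∈ I ^ (δ + 1) := by
    rw [key]
    refine Ideal.add_mem _ hT ?_
    have hpow : I ^ (δ + 1) = I ^ δ * I ^ 1 := by rw [← pow_add]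
    rw [hpow]
    exact Ideal.mul_mem_mul hBmem hone
  have hD : D = Ring.inverse u * Ring.inverse A * (u * A * D) := by
    linear_combination (-D) * h1 - D * u * Ring.inverse u * h2
  rw [hD]
  exact Ideal.mul_mem_left _ _ hkey_mem

end Helpers

/-- The allRootsNI recurrence. With `f = ∏(y−g_i)^{γ_i}`, constant terms
`μ_i = g_i(0̄)` pairwise distinct, `δ ≥ 1`, and `c ∈ F` distinct from all `μ_i`:
`((∂_y f)/f)|_{y=c} ≡ ∑ γ_i/(c − g_i^{<δ}) + ∑ γ_i·g_i^{=δ}/(c−μ_i)²  (mod ⟨x̄⟩^{δ+1})`. -/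
theorem stmt8 (F : Type*) [Field F] (n d₀ : ℕ)
    (g : Fin d₀ → MvPowerSeries (Fin n) F) (γ : Fin d₀ → ℕ) (hγ : ∀ i, 0 < γ i)
    (μ : Fin d₀ → F) (hμ : ∀ i, μ i = MvPowerSeries.constantCoeff (σ := Fin n) (R := F) (g i))
    (hdist : Function.Injective μ)
    (f : Polynomial (MvPowerSeries (Fin n) F))
    (hf : f = ∏ i : Fin d₀, (Polynomial.X - Polynomial.C (g i)) ^ (γ i))
    (δ : ℕ) (hδ : 1 ≤ δ) (c : F) (hc : ∀ i, c ≠ μ i) :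
    let R := MvPowerSeries (Fin n) F
    let C : F →+* R := MvPowerSeries.C (σ := Fin n) (R := F)
    let I : Ideal R := Ideal.span (Set.range (MvPowerSeries.X : Fin n → R))
    Polynomial.eval (C c) (Polynomial.derivative f) * Ring.inverse (Polynomial.eval (C c) f)
      - ((∑ i : Fin d₀, (γ i : R) * Ring.inverse (C c - truncLT δ (g i)))
        + ∑ i : Fin d₀, (γ i : R) * homPart δ (g i) * C (((c - μ i) ^ 2)⁻¹))
      ∈ I ^ (δ + 1) := by
  intro R C I
  show Polynomial.eval (MvPowerSeries.C (σ := Fin n) (R := F) c) (Polynomial.derivative f)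
        * Ring.inverse (Polynomial.eval (MvPowerSeries.C (σ := Fin n) (R := F) c) f)
      - ((∑ i : Fin d₀, (γ i : MvPowerSeries (Fin n) F)
            * Ring.inverse (MvPowerSeries.C (σ := Fin n) (R := F) c - truncLT δ (g i)))
        + ∑ i : Fin d₀, (γ i : MvPowerSeries (Fin n) F) * homPart δ (g i)
            * MvPowerSeries.C (σ := Fin n) (R := F) (((c - μ i) ^ 2)⁻¹))
      ∈ (Ideal.span (Set.range
          (MvPowerSeries.X : Fin n → MvPowerSeries (Fin n) F))) ^ (δ + 1)
  classical
  subst hf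
  set Cc : MvPowerSeries (Fin n) F := MvPowerSeries.C (σ := Fin n) (R := F) c with hCc
  have hui : ∀ i, IsUnit (Cc - g i) := by
    intro i
    apply MvPowerSeries.isUnit_iff_constantCoeff.mpr
    rw [map_sub, hCc, MvPowerSeries.constantCoeff_C, ← hμ i]
    exact (sub_ne_zero.mpr (hc i)).isUnit
  have h_eval : Polynomial.eval Cc (∏ i : Fin d₀, (Polynomial.X - Polynomial.C (g i)) ^ (γ i))
      = ∏ i : Fin d₀, (Cc - g i) ^ γ i := by
    rw [Polynomial.eval_prod]
    simp only [Polynomial.eval_pow, Polynomial.eval_sub, Polynomial.eval_X, Polynomial.eval_C]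
  have hprod : (∏ i : Fin d₀, (Cc - g i) ^ γ i)
      * (∏ i : Fin d₀, Ring.inverse (Cc - g i) ^ γ i) = 1 := by
    rw [← Finset.prod_mul_distrib]
    apply Finset.prod_eq_one
    intro i _
    rw [← mul_pow, Ring.mul_inverse_cancel _ (hui i), one_pow]
  have hinv : Ring.inverse (∏ i : Fin d₀, (Cc - g i) ^ γ i)
      = ∏ i : Fin d₀, Ring.inverse (Cc - g i) ^ γ i := inverse_eq_of_mul_eq_one' hprod
  have h_deriv : Polynomial.eval Cc
        (Polynomial.derivative (∏ i : Fin d₀, (Polynomial.X - Polynomial.C (g i)) ^ (γ i)))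
      = ∑ i : Fin d₀, (∏ j ∈ Finset.univ.erase i, (Cc - g j) ^ γ j)
          * ((γ i : MvPowerSeries (Fin n) F) * (Cc - g i) ^ (γ i - 1)) := by
    rw [deriv_prod, Polynomial.eval_finset_sum]
    apply Finset.sum_congr rfl
    intro i _
    rw [Polynomial.derivative_X_sub_C_pow, Polynomial.eval_mul, Polynomial.eval_prod]
    simp only [Polynomial.eval_mul, Polynomial.eval_pow, Polynomial.eval_sub,
      Polynomial.eval_X, Polynomial.eval_C]
  have hmain : Polynomial.eval Cc
        (Polynomial.derivative (∏ i : Fin d₀, (Polynomial.X - Polynomial.C (g i)) ^ (γ i)))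
      * Ring.inverse
          (Polynomial.eval Cc (∏ i : Fin d₀, (Polynomial.X - Polynomial.C (g i)) ^ (γ i)))
      = ∑ i : Fin d₀, (γ i : MvPowerSeries (Fin n) F) * Ring.inverse (Cc - g i) := by
    rw [h_deriv, h_eval, hinv, Finset.sum_mul]
    apply Finset.sum_congr rfl
    intro i _
    have hE : (∏ j ∈ Finset.univ.erase i, (Cc - g j) ^ γ j)
        * (∏ j ∈ Finset.univ.erase i, Ring.inverse (Cc - g j) ^ γ j) = 1 := by
      rw [← Finset.prod_mul_distrib]
      apply Finset.prod_eq_one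
      intro j _
      rw [← mul_pow, Ring.mul_inverse_cancel _ (hui j), one_pow]
    have hsplit : (∏ j : Fin d₀, Ring.inverse (Cc - g j) ^ γ j)
        = Ring.inverse (Cc - g i) ^ γ i
          * ∏ j ∈ Finset.univ.erase i, Ring.inverse (Cc - g j) ^ γ j :=
      (Finset.mul_prod_erase _ _ (Finset.mem_univ i)).symm
    have hself : (Cc - g i) ^ (γ i - 1) * Ring.inverse (Cc - g i) ^ γ i
        = Ring.inverse (Cc - g i) := by
      obtain ⟨k, hk⟩ : ∃ k, γ i = k + 1 := ⟨γ i - 1, (Nat.succ_pred_eq_of_pos (hγ i)).symm⟩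
      rw [hk, Nat.add_sub_cancel, pow_succ, ← mul_assoc, ← mul_pow,
        Ring.mul_inverse_cancel _ (hui i), one_pow, one_mul]
    rw [hsplit]
    calc (∏ j ∈ Finset.univ.erase i, (Cc - g j) ^ γ j)
          * ((γ i : MvPowerSeries (Fin n) F) * (Cc - g i) ^ (γ i - 1))
          * (Ring.inverse (Cc - g i) ^ γ i
            * ∏ j ∈ Finset.univ.erase i, Ring.inverse (Cc - g j) ^ γ j)
        = (γ i : MvPowerSeries (Fin n) F)
            * (((Cc - g i) ^ (γ i - 1) * Ring.inverse (Cc - g i) ^ γ i)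
              * ((∏ j ∈ Finset.univ.erase i, (Cc - g j) ^ γ j)
                * ∏ j ∈ Finset.univ.erase i, Ring.inverse (Cc - g j) ^ γ j)) := by ring
      _ = (γ i : MvPowerSeries (Fin n) F) * Ring.inverse (Cc - g i) := by
          rw [hself, hE]; ring
  rw [hmain]
  have hsum_eq : (∑ i : Fin d₀, (γ i : MvPowerSeries (Fin n) F) * Ring.inverse (Cc - g i))
      - ((∑ i : Fin d₀, (γ i : MvPowerSeries (Fin n) F)
            * Ring.inverse (Cc - truncLT δ (g i)))
        + ∑ i : Fin d₀, (γ i : MvPowerSeries (Fin n) F) * homPart δ (g i)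
            * MvPowerSeries.C (σ := Fin n) (R := F) (((c - μ i) ^ 2)⁻¹))
      = ∑ i : Fin d₀, (γ i : MvPowerSeries (Fin n) F)
          * (Ring.inverse (Cc - g i) - Ring.inverse (Cc - truncLT δ (g i))
            - homPart δ (g i) * MvPowerSeries.C (σ := Fin n) (R := F) (((c - μ i) ^ 2)⁻¹)) := by
    rw [← Finset.sum_add_distrib, ← Finset.sum_sub_distrib]
    apply Finset.sum_congr rfl
    intro i _
    ring
  rw [hsum_eq]
  apply Ideal.sum_mem
  intro i _
  apply Ideal.mul_mem_left
  have hres := inv_lemma hδ (g i) c (by rw [← hμ i]; exact hc i)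
  rw [← hμ i] at hres
  exact hres
end
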